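/- arXiv:2310.20571 — 2 statements merged into one kernel-verified Lean document; each statement's English description precedes it below -/
import Mathlib

section
/- Let P be a regular Schur labeled skew shape poset on {1,…,n} with τ_P of skew shape λ/μ. Then the set Σ_L(P) of linear extensions of P (viewed as permutations σ with σ(i) ≤ σ(j) whenever i ≤_P j) equals the left weak Bruhat interval [read_{τ_P}(T_{λ/μ}), read_{τ_P}(T'_{λ/μ})]_L, where T_{λ/μ} is the standard Young tableau filling 1,…,n row by row from the top (left to right in each row), and T'_{λ/μ} is the standard Young tableau filling 1,…,n column by column from the leftmost column (top to bottom in each column). -/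
/-- A skew partition `λ/μ`: a pair of Young diagrams with `μ ⊆ λ`. -/
structure SkewShape where
  outer : YoungDiagram
  inner : YoungDiagram
  le : inner ≤ outer

/-- The cells of the skew diagram `λ/μ` (pairs `(row, column)`). -/
def SkewShape.cells (s : SkewShape) : Finset (ℕ × ℕ) := s.outer.cells \ s.inner.cells

/-- A bijective tableau of shape `λ/μ` of size `n`: a filling of the cells with the
`n` distinct entries of `Fin n`. -/
def IsBijFilling (s : SkewShape) (n : ℕ) (τ : ℕ × ℕ → Fin n) : Prop :=
  Set.BijOn τ ↑s.cells Set.univ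

/-- A standard Young tableau of shape `λ/μ`: a bijective filling whose rows increase
left to right and whose columns increase top to bottom. -/
def IsSYT (s : SkewShape) (n : ℕ) (T : ℕ × ℕ → Fin n) : Prop :=
  IsBijFilling s n T ∧
  (∀ i j, (i, j) ∈ s.cells → (i, j + 1) ∈ s.cells → T (i, j) < T (i, j + 1)) ∧
  (∀ i j, (i, j) ∈ s.cells → (i + 1, j) ∈ s.cells → T (i, j) < T (i + 1, j))

/-- A Schur labeling: a bijective filling whose rows strictly decrease left to right
and whose columns strictly increase top to bottom. -/
def IsSchurLabeling (s : SkewShape) (n : ℕ) (τ : ℕ × ℕ → Fin n) : Prop :=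
  IsBijFilling s n τ ∧
  (∀ i j, (i, j) ∈ s.cells → (i, j + 1) ∈ s.cells → τ (i, j + 1) < τ (i, j)) ∧
  (∀ i j, (i, j) ∈ s.cells → (i + 1, j) ∈ s.cells → τ (i, j) < τ (i + 1, j))

/-- A distinguished Schur labeling: `τ_B ≥ τ_{B'}` whenever `B` is weakly below and
weakly left of `B'`. -/
def IsDistinguished (s : SkewShape) (n : ℕ) (τ : ℕ × ℕ → Fin n) : Prop :=
  IsSchurLabeling s n τ ∧
  ∀ B ∈ s.cells, ∀ B' ∈ s.cells, B'.1 ≤ B.1 → B.2 ≤ B'.2 → τ B' ≤ τ B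

/-- `π = read_τ(T)`, i.e. `π(τ(B)) = T(B)` for every box `B`; since `τ` is a bijective
filling this determines `π` completely. -/
def IsReading (s : SkewShape) {n : ℕ} (τ T : ℕ × ℕ → Fin n) (π : Equiv.Perm (Fin n)) : Prop :=
  ∀ B ∈ s.cells, π (τ B) = T B

/-- The poset `poset(τ)` on labels: `x ≤ y` iff the box of `x` is weakly upper-left of
the box of `y`. -/
def posetRel (s : SkewShape) {n : ℕ} (τ : ℕ × ℕ → Fin n) (x y : Fin n) : Prop :=
  ∃ B ∈ s.cells, ∃ B' ∈ s.cells, τ B = x ∧ τ B' = y ∧ B.1 ≤ B'.1 ∧ B.2 ≤ B'.2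

/-- The right inversion set `Inv_R(σ) = {(σ(i),σ(j)) : i < j, σ(i) > σ(j)}`. -/
def InvR {n : ℕ} (σ : Equiv.Perm (Fin n)) : Set (Fin n × Fin n) :=
  {p | p.2 < p.1 ∧ σ⁻¹ p.1 < σ⁻¹ p.2}

/-- The right weak Bruhat order: `σ ≤_R ρ` iff `Inv_R(σ) ⊆ Inv_R(ρ)`. -/
def rLE {n : ℕ} (σ ρ : Equiv.Perm (Fin n)) : Prop := InvR σ ⊆ InvR ρ

/-- The left inversion set. -/
def InvL {n : ℕ} (σ : Equiv.Perm (Fin n)) : Set (Fin n × Fin n) :=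
  {p | p.1 < p.2 ∧ σ p.2 < σ p.1}

/-- The left weak Bruhat order. -/
def lLE {n : ℕ} (σ ρ : Equiv.Perm (Fin n)) : Prop := InvL σ ⊆ InvL ρ

/-- `τ` is the Schur labeling `τ₀`, filling `1,…,n` right-to-left along rows starting
with the top row: characterized by its bijectivity together with the induced order of
the boxes. -/
def IsTau0 (s : SkewShape) (n : ℕ) (τ : ℕ × ℕ → Fin n) : Prop :=
  IsBijFilling s n τ ∧
  ∀ B ∈ s.cells, ∀ B' ∈ s.cells, B ≠ B' →
    (τ B < τ B' ↔ (B.1 < B'.1 ∨ (B.1 = B'.1 ∧ B'.2 < B.2)))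

/-- `τ` is the Schur labeling `τ₁`, filling `1,…,n` top-to-bottom along columns starting
with the rightmost column. -/
def IsTau1 (s : SkewShape) (n : ℕ) (τ : ℕ × ℕ → Fin n) : Prop :=
  IsBijFilling s n τ ∧
  ∀ B ∈ s.cells, ∀ B' ∈ s.cells, B ≠ B' →
    (τ B < τ B' ↔ (B'.2 < B.2 ∨ (B.2 = B'.2 ∧ B.1 < B'.1)))

/-- `T` is the standard Young tableau `T_{λ/μ}`, filling `1,…,n` row by row from the
top, left to right in each row. -/
def IsRowTab (s : SkewShape) (n : ℕ) (T : ℕ × ℕ → Fin n) : Prop :=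
  IsBijFilling s n T ∧
  ∀ B ∈ s.cells, ∀ B' ∈ s.cells, B ≠ B' →
    (T B < T B' ↔ (B.1 < B'.1 ∨ (B.1 = B'.1 ∧ B.2 < B'.2)))

/-- `T` is the standard Young tableau `T'_{λ/μ}`, filling `1,…,n` column by column from
the leftmost column, top to bottom in each column. -/
def IsColTab (s : SkewShape) (n : ℕ) (T : ℕ × ℕ → Fin n) : Prop :=
  IsBijFilling s n T ∧
  ∀ B ∈ s.cells, ∀ B' ∈ s.cells, B ≠ B' →
    (T B < T B' ↔ (B.2 < B'.2 ∨ (B.2 = B'.2 ∧ B.1 < B'.1)))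

/-- Two boxes are adjacent (share an edge). -/
def AdjBox (B B' : ℕ × ℕ) : Prop :=
  (B.1 = B'.1 ∧ (B.2 + 1 = B'.2 ∨ B'.2 + 1 = B.2)) ∨
  (B.2 = B'.2 ∧ (B.1 + 1 = B'.1 ∨ B'.1 + 1 = B.1))

/-- Two boxes lie in the same connected component of the skew diagram. -/
def SameComp (s : SkewShape) (B B' : ℕ × ℕ) : Prop :=
  Relation.ReflTransGen (fun x y => x ∈ s.cells ∧ y ∈ s.cells ∧ AdjBox x y) B B'

/-- The skew diagram is basic: it contains no empty rows and no empty columns. -/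
def IsBasic (s : SkewShape) : Prop :=
  (∀ i i' : ℕ, i ≤ i' → (∃ j, (i', j) ∈ s.cells) → ∃ j, (i, j) ∈ s.cells) ∧
  (∀ j j' : ℕ, j ≤ j' → (∃ i, (i, j') ∈ s.cells) → ∃ i, (i, j) ∈ s.cells)

/-- Condition (iii) in the definition of the canonical Schur labeling `τ_P`: the minimal
entries of the connected components, ordered from the top, increase. -/
def CompMinCond (s : SkewShape) {n : ℕ} (τ : ℕ × ℕ → Fin n) : Prop :=
  ∀ B ∈ s.cells, ∀ B' ∈ s.cells, ¬ SameComp s B B' → B.1 < B'.1 →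
    ∃ B₀ ∈ s.cells, SameComp s B B₀ ∧ ∀ B₁ ∈ s.cells, SameComp s B' B₁ → τ B₀ < τ B₁

/-- A binary relation on `{1,…,n}` is regular if for all `x ≤_P z` and `y` between `x`
and `z` as integers, `x ≤_P y` or `y ≤_P z`. -/
def RegularRel {n : ℕ} (r : Fin n → Fin n → Prop) : Prop :=
  ∀ x y z : Fin n, r x z → ((x < y ∧ y < z) ∨ (z < y ∧ y < x)) → r x y ∨ r y z

set_option linter.unusedVariables false

namespace SigmaLAux

variable (s : SkewShape) {n : ℕ} (τ : ℕ × ℕ → Fin n)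

lemma mem_cells' {B : ℕ × ℕ} : B ∈ s.cells ↔ B ∈ s.outer ∧ B ∉ s.inner := by
  rw [SkewShape.cells, Finset.mem_sdiff, YoungDiagram.mem_cells, YoungDiagram.mem_cells]

lemma rowContig {a b c j : ℕ} (hb : (a, b) ∈ s.cells) (hc : (a, c) ∈ s.cells)
    (h1 : b ≤ j) (h2 : j ≤ c) : (a, j) ∈ s.cells := by
  rw [mem_cells'] at hb hc ⊢
  refine ⟨s.outer.up_left_mem le_rfl h2 hc.1, fun hin => hb.2 ?_⟩
  exact s.inner.up_left_mem le_rfl h1 hin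

lemma colContig {a b c j : ℕ} (hb : (b, a) ∈ s.cells) (hc : (c, a) ∈ s.cells)
    (h1 : b ≤ j) (h2 : j ≤ c) : (j, a) ∈ s.cells := by
  rw [mem_cells'] at hb hc ⊢
  refine ⟨s.outer.up_left_mem h2 le_rfl hc.1, fun hin => hb.2 ?_⟩
  exact s.inner.up_left_mem h1 le_rfl hin

lemma sameRowComp {a b c : ℕ} (hb : (a, b) ∈ s.cells) (h : b ≤ c) :
    (a, c) ∈ s.cells → SameComp s (a, b) (a, c) := by
  induction c, h using Nat.le_induction with
  | base => intro _; exact Relation.ReflTransGen.refl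
  | succ c hbc ih =>
    intro hc
    have hcc : (a, c) ∈ s.cells := rowContig s hb hc hbc (Nat.le_succ c)
    exact (ih hcc).tail ⟨hcc, hc, Or.inl ⟨rfl, Or.inl rfl⟩⟩

lemma sameColComp {a b c : ℕ} (hb : (b, a) ∈ s.cells) (h : b ≤ c) :
    (c, a) ∈ s.cells → SameComp s (b, a) (c, a) := by
  induction c, h using Nat.le_induction with
  | base => intro _; exact Relation.ReflTransGen.refl
  | succ c hbc ih =>
    intro hc
    have hcc : (c, a) ∈ s.cells := colContig s hb hc hbc (Nat.le_succ c)
    exact (ih hcc).tail ⟨hcc, hc, Or.inr ⟨rfl, Or.inl rfl⟩⟩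

lemma adjSymm {B B' : ℕ × ℕ} (h : AdjBox B B') : AdjBox B' B := by
  unfold AdjBox at *; tauto

lemma compSymm {B B' : ℕ × ℕ} (h : SameComp s B B') : SameComp s B' B :=
  (@Relation.ReflTransGen.stdSymm _ _ ⟨fun _ _ h => ⟨h.2.1, h.1, adjSymm h.2.2⟩⟩).symm _ _ h

lemma nwComp {D E : ℕ × ℕ} (hD : D ∈ s.cells) (hE : E ∈ s.cells)
    (l1 : D.1 ≤ E.1) (l2 : D.2 ≤ E.2) : SameComp s D E := by
  obtain ⟨a, b⟩ := D; obtain ⟨r, c⟩ := E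
  simp only at l1 l2
  have hmid : (a, c) ∈ s.cells := by
    rw [mem_cells'] at hD hE ⊢
    exact ⟨s.outer.up_left_mem l1 le_rfl hE.1, fun hin => hD.2 (s.inner.up_left_mem le_rfl l2 hin)⟩
  exact (sameRowComp s hD l2 hmid).trans (sameColComp s hmid l1 hE)

lemma rowMono (hschur : IsSchurLabeling s n τ) {a b c : ℕ} (hb : (a, b) ∈ s.cells)
    (h : b < c) : (a, c) ∈ s.cells → τ (a, c) < τ (a, b) := by
  induction c, h using Nat.le_induction with
  | base => intro hc; exact hschur.2.1 a b hb hc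
  | succ c hbc ih =>
    intro hc
    have hcc : (a, c) ∈ s.cells := rowContig s hb hc (Nat.le_of_lt hbc) (Nat.le_succ c)
    exact (hschur.2.1 a c hcc hc).trans (ih hcc)

lemma colMono (hschur : IsSchurLabeling s n τ) {a b c : ℕ} (hb : (b, a) ∈ s.cells)
    (h : b < c) : (c, a) ∈ s.cells → τ (b, a) < τ (c, a) := by
  induction c, h using Nat.le_induction with
  | base => intro hc; exact hschur.2.2 b a hb hc
  | succ c hbc ih =>
    intro hc
    have hcc : (c, a) ∈ s.cells := colContig s hb hc (Nat.le_of_lt hbc) (Nat.le_succ c)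
    exact (ih hcc).trans (hschur.2.2 c a hcc hc)

lemma rowMonoLe (hschur : IsSchurLabeling s n τ) {a b c : ℕ} (hb : (a, b) ∈ s.cells)
    (hc : (a, c) ∈ s.cells) (h : b ≤ c) : τ (a, c) ≤ τ (a, b) := by
  rcases eq_or_lt_of_le h with rfl | h
  · exact le_rfl
  · exact (rowMono s τ hschur hb h hc).le

lemma crossing {B B' : ℕ × ℕ} (h : SameComp s B B') :
    ∀ i, B'.1 ≤ i → i < B.1 → ∃ j, (i, j) ∈ s.cells ∧ (i + 1, j) ∈ s.cells := by
  induction h using Relation.ReflTransGen.head_induction_on with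
  | refl => intro i h1 h2; omega
  | @head a c h' hrest ih =>
    intro i h1 h2
    obtain ⟨ha, hc, hadj⟩ := h'
    by_cases hic : i < c.1
    · exact ih i h1 hic
    · push_neg at hic
      rcases hadj with ⟨he, _⟩ | ⟨he, hv | hv⟩
      · omega
      · omega
      · -- c.1 + 1 = a.1, so i = c.1
        have h3 : (i, a.2) = c := by
          rw [he]; rw [show i = c.1 by omega]
        have h4 : (i + 1, a.2) = a := by
          rw [show i + 1 = a.1 by omega]
        exact ⟨a.2, h3 ▸ hc, h4 ▸ ha⟩


lemma posetComp (hinj : Set.InjOn τ ↑s.cells) {D E : ℕ × ℕ} (hD : D ∈ s.cells) (hE : E ∈ s.cells)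
    (h : posetRel s τ (τ D) (τ E)) : SameComp s D E := by
  obtain ⟨C, hC, C', hC', e1, e2, l1, l2⟩ := h
  have h1 : C = D := hinj hC hD e1
  have h2 : C' = E := hinj hC' hE e2
  subst h1; subst h2
  exact nwComp s hC hC' l1 l2

lemma adjCompar {B B' : ℕ × ℕ} (h : AdjBox B B') :
    (B.1 ≤ B'.1 ∧ B.2 ≤ B'.2) ∨ (B'.1 ≤ B.1 ∧ B'.2 ≤ B.2) := by
  rcases h with ⟨h1, h2 | h2⟩ | ⟨h1, h2 | h2⟩ <;> omega

lemma straddle (hschur : IsSchurLabeling s n τ) (hreg : RegularRel (posetRel s τ))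
    {B B₁ C : ℕ × ℕ} (h : SameComp s B B₁) (hC : C ∈ s.cells) (h2 : τ C < τ B₁) :
    τ B < τ C → SameComp s B C := by
  induction h using Relation.ReflTransGen.head_induction_on with
  | refl => intro h1; exact absurd (h1.trans h2) (lt_irrefl _)
  | @head a c h' hrest ih =>
    intro h1
    obtain ⟨ha, hc, hadj⟩ := h'
    rcases lt_trichotomy (τ C) (τ c) with hlt | heq | hgt
    · have step : SameComp s a c := Relation.ReflTransGen.single ⟨ha, hc, hadj⟩
      rcases adjCompar hadj with ⟨l1, l2⟩ | ⟨l1, l2⟩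
      · have pr : posetRel s τ (τ a) (τ c) := ⟨a, ha, c, hc, rfl, rfl, l1, l2⟩
        rcases hreg (τ a) (τ C) (τ c) pr (Or.inl ⟨h1, hlt⟩) with hp | hp
        · exact posetComp s τ hschur.1.injOn ha hC hp
        · exact step.trans (compSymm s (posetComp s τ hschur.1.injOn hC hc hp))
      · have pr : posetRel s τ (τ c) (τ a) := ⟨c, hc, a, ha, rfl, rfl, l1, l2⟩
        rcases hreg (τ c) (τ C) (τ a) pr (Or.inr ⟨h1, hlt⟩) with hp | hp
        · exact step.trans (posetComp s τ hschur.1.injOn hc hC hp)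
        · exact compSymm s (posetComp s τ hschur.1.injOn hC ha hp)
    · have : C = c := hschur.1.injOn hC hc heq
      exact this ▸ Relation.ReflTransGen.single ⟨ha, hc, hadj⟩
    · exact (Relation.ReflTransGen.single ⟨ha, hc, hadj⟩).trans (ih hgt)

lemma neLemma (hschur : IsSchurLabeling s n τ) :
    ∀ k (B' B : ℕ × ℕ), B.1 = k → B' ∈ s.cells → B ∈ s.cells → SameComp s B' B →
    B'.1 ≤ B.1 → B.2 ≤ B'.2 → B ≠ B' → τ B' < τ B := by
  intro k
  induction k using Nat.strong_induction_on with
  | _ k ih =>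
    rintro ⟨r', c'⟩ ⟨r, c⟩ hk hB' hB hcomp h1 h2 hne
    simp only at h1 h2 hk
    subst hk
    rcases eq_or_lt_of_le h1 with heq | hlt
    · subst heq
      have hcc : c < c' := lt_of_le_of_ne h2 (fun h => hne (by rw [h]))
      exact rowMono s τ hschur hB hcc hB'
    · rcases eq_or_lt_of_le h2 with heq2 | hlt2
      · rw [← heq2]
        exact colMono s τ hschur (heq2 ▸ hB') hlt hB
      · by_cases hcell : (r, c') ∈ s.cells
        · exact (colMono s τ hschur hB' hlt hcell).trans (rowMono s τ hschur hB hlt2 hcell)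
        · have hr1 : 1 ≤ r := by omega
          obtain ⟨j, hj1, hj2⟩ := crossing s (compSymm s hcomp) (r - 1) (by omega) (by omega)
          rw [show r - 1 + 1 = r by omega] at hj2
          have hjc' : j < c' := by
            by_contra hcon
            push_neg at hcon
            exact hcell (rowContig s hB hj2 (le_of_lt hlt2) hcon)
          by_cases hcj : c ≤ j
          · -- E = (r-1, j)
            have hcompE : SameComp s (r', c') (r - 1, j) :=
              (hcomp.trans (sameRowComp s hB hcj hj2)).tail
                ⟨hj2, hj1, Or.inr ⟨rfl, Or.inr (by omega)⟩⟩
            have h5 : τ (r', c') < τ (r - 1, j) :=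
              ih (r - 1) (by omega) (r', c') (r - 1, j) rfl hB' hj1 hcompE
                (by simp; omega) (by simp; omega)
                (by simp [Prod.ext_iff]; omega)
            have h6 : τ (r - 1, j) < τ (r, j) := colMono s τ hschur hj1 (by omega) hj2
            exact h5.trans (h6.trans_le (rowMonoLe s τ hschur hB hj2 hcj))
          · -- j < c, E = (r-1, c)
            push_neg at hcj
            have hEc : (r - 1, c) ∈ s.cells := by
              rw [mem_cells'] at hB hj1 ⊢
              refine ⟨s.outer.up_left_mem (by omega) le_rfl hB.1, fun hin => hj1.2 ?_⟩
              exact s.inner.up_left_mem le_rfl (le_of_lt hcj) hin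
            have hcompE : SameComp s (r', c') (r - 1, c) :=
              hcomp.tail ⟨hB, hEc, Or.inr ⟨rfl, Or.inr (by omega)⟩⟩
            have h5 : τ (r', c') < τ (r - 1, c) :=
              ih (r - 1) (by omega) (r', c') (r - 1, c) rfl hB' hEc hcompE
                (by simp; omega) (by simp; omega)
                (by simp [Prod.ext_iff]; omega)
            exact h5.trans (colMono s τ hschur hEc (by omega) hB)

lemma dist (hschur : IsSchurLabeling s n τ) (hmin : CompMinCond s τ)
    (hreg : RegularRel (posetRel s τ)) {B' B : ℕ × ℕ} (hB' : B' ∈ s.cells) (hB : B ∈ s.cells)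
    (h1 : B'.1 ≤ B.1) (h2 : B.2 ≤ B'.2) (hne : B ≠ B') : τ B' < τ B := by
  by_cases hcomp : SameComp s B' B
  · exact neLemma s τ hschur B.1 B' B rfl hB' hB hcomp h1 h2 hne
  · have hlt : B'.1 < B.1 := by
      rcases eq_or_lt_of_le h1 with heq | h; swap; · exact h
      exfalso
      apply hcomp
      have e1 : (B.1, B.2) = B := rfl
      have e2 : (B.1, B'.2) = B' := by rw [← heq]
      have hBc : (B.1, B.2) ∈ s.cells := e1 ▸ hB
      have hB'c : (B.1, B'.2) ∈ s.cells := e2 ▸ hB'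
      have := sameRowComp s hBc h2 hB'c
      rw [e1, e2] at this
      exact compSymm s this
    obtain ⟨B₀, hB₀, hcomp₀, hall⟩ := hmin B' hB' B hB hcomp hlt
    have hB₀B : τ B₀ < τ B := hall B hB Relation.ReflTransGen.refl
    by_contra hcon
    push_neg at hcon
    have hBB' : τ B < τ B' :=
      lt_of_le_of_ne hcon (fun h => hne (hschur.1.injOn hB hB' h))
    have : SameComp s B₀ B :=
      straddle s τ hschur hreg (compSymm s hcomp₀) hB hBB' hB₀B
    exact hcomp (hcomp₀.trans this)

end SigmaLAux

open SigmaLAux in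
/-- For a regular Schur labeled skew shape poset `P` with canonical Schur labeling
`τ_P` of shape `λ/μ`, the set of linear extensions `Σ_L(P)` equals the left weak Bruhat
interval `[read_{τ_P}(T_{λ/μ}), read_{τ_P}(T'_{λ/μ})]_L`. -/
theorem sigmaL_eq_left_interval (s : SkewShape) (n : ℕ) (τ : ℕ × ℕ → Fin n)
    (hschur : IsSchurLabeling s n τ) (hbasic : IsBasic s) (hmin : CompMinCond s τ)
    (hreg : RegularRel (posetRel s τ))
    (T T' : ℕ × ℕ → Fin n) (hT : IsRowTab s n T) (hT' : IsColTab s n T')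
    (πmin πmax : Equiv.Perm (Fin n))
    (hπmin : IsReading s τ T πmin) (hπmax : IsReading s τ T' πmax) :
    {σ : Equiv.Perm (Fin n) | ∀ B ∈ s.cells, ∀ B' ∈ s.cells,
        B.1 ≤ B'.1 → B.2 ≤ B'.2 → σ (τ B) ≤ σ (τ B')} =
      {γ | lLE πmin γ ∧ lLE γ πmax} := by
  have hinj := hschur.1.injOn
  have hsurj : ∀ x : Fin n, ∃ B ∈ s.cells, τ B = x := by
    intro x
    obtain ⟨B, hB, e⟩ := hschur.1.surjOn (Set.mem_univ x)
    exact ⟨B, hB, e⟩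
  ext σ
  simp only [Set.mem_setOf_eq]
  constructor
  · intro hσ
    constructor
    · rintro ⟨x, y⟩ ⟨hxy, hinv⟩
      obtain ⟨Bx, hBx, hx⟩ := hsurj x
      obtain ⟨By, hBy, hy⟩ := hsurj y
      subst hx; subst hy
      simp only at hxy hinv
      have hne : By ≠ Bx := fun h => hxy.ne (by rw [h])
      have hrow : By.1 < Bx.1 ∨ (By.1 = Bx.1 ∧ By.2 < Bx.2) := by
        have hTlt : T By < T Bx := by
          rw [← hπmin Bx hBx, ← hπmin By hBy]; exact hinv
        exact (hT.2 By hBy Bx hBx hne).mp hTlt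
      have hNW : By.1 ≤ Bx.1 ∧ By.2 ≤ Bx.2 := by
        rcases hrow with h | ⟨h, h2⟩
        · refine ⟨h.le, ?_⟩
          by_contra hcon
          push_neg at hcon
          exact absurd (dist s τ hschur hmin hreg hBy hBx h.le hcon.le hne.symm)
            (not_lt.mpr hxy.le)
        · exact ⟨h.le, h2.le⟩
      have hle : σ (τ By) ≤ σ (τ Bx) := hσ By hBy Bx hBx hNW.1 hNW.2
      exact ⟨hxy, lt_of_le_of_ne hle (fun h => hxy.ne (σ.injective h).symm)⟩
    · rintro ⟨x, y⟩ ⟨hxy, hinv⟩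
      obtain ⟨Bx, hBx, hx⟩ := hsurj x
      obtain ⟨By, hBy, hy⟩ := hsurj y
      subst hx; subst hy
      simp only at hxy hinv
      have hne : By ≠ Bx := fun h => hxy.ne (by rw [h])
      have hnotNW : ¬(Bx.1 ≤ By.1 ∧ Bx.2 ≤ By.2) := by
        rintro ⟨l1, l2⟩
        exact absurd (hσ Bx hBx By hBy l1 l2) (not_le.mpr hinv)
      have hcol : By.2 < Bx.2 ∨ (By.2 = Bx.2 ∧ By.1 < Bx.1) := by
        rcases Nat.lt_or_ge By.2 Bx.2 with h | h
        · exact Or.inl h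
        · have l1 : ¬ Bx.1 ≤ By.1 := fun hl => hnotNW ⟨hl, h⟩
          push_neg at l1
          rcases eq_or_lt_of_le h with heq | hlt
          · exact Or.inr ⟨heq.symm, l1⟩
          · exact absurd (dist s τ hschur hmin hreg hBy hBx l1.le hlt.le hne.symm)
              (not_lt.mpr hxy.le)
      refine ⟨hxy, ?_⟩
      show πmax (τ By) < πmax (τ Bx)
      rw [hπmax Bx hBx, hπmax By hBy]
      exact (hT'.2 By hBy Bx hBx hne).mpr hcol
  · rintro ⟨hlo, hhi⟩ B hB B' hB' h1 h2
    by_cases hBB : B = B'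
    · subst hBB; exact le_rfl
    have hτ : τ B ≠ τ B' := fun h => hBB (hinj hB hB' h)
    rcases lt_or_gt_of_ne hτ with hlt | hgt
    · by_contra hcon
      push_neg at hcon
      have hmem : (τ B, τ B') ∈ InvL σ := ⟨hlt, hcon⟩
      have hmax : (τ B, τ B') ∈ InvL πmax := hhi hmem
      obtain ⟨-, hmax2⟩ := hmax
      simp only at hmax2
      rw [hπmax B hB, hπmax B' hB'] at hmax2
      have := (hT'.2 B' hB' B hB (Ne.symm hBB)).mp hmax2
      omega
    · have hTlt : T B < T B' := by
        apply (hT.2 B hB B' hB' hBB).mpr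
        rcases eq_or_lt_of_le h1 with heq | h
        · refine Or.inr ⟨heq, lt_of_le_of_ne h2 (fun hc => hBB ?_)⟩
          exact Prod.ext heq hc
        · exact Or.inl h
      have hmem : (τ B', τ B) ∈ InvL πmin := by
        refine ⟨hgt, ?_⟩
        show πmin (τ B) < πmin (τ B')
        rw [hπmin B hB, hπmin B' hB']
        exact hTlt
      exact (hlo hmem).2.le
end

section
/- A nonempty subset U of S_n with |U| > 1 is a left weak Bruhat interval if and only if U = Σ_L(P) for some regular poset P on {1,…,n}, where Σ_L(P) = {σ ∈ S_n : σ(i) ≤ σ(j) whenever i ≤_P j}. -/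
lemma exists_perm_of_linear {n : ℕ} (le : Fin n → Fin n → Prop)
    (hrefl : ∀ a, le a a) (htrans : ∀ a b c, le a b → le b c → le a c)
    (hanti : ∀ a b, le a b → le b a → a = b) (htot : ∀ a b, le a b ∨ le b a) :
    ∃ σ : Equiv.Perm (Fin n), ∀ i j, σ i ≤ σ j ↔ le i j := by
  classical
  set lt : Fin n → Fin n → Prop := fun a b => le a b ∧ a ≠ b with hlt
  haveI : IsStrictTotalOrder (Fin n) lt := by
    refine { trichotomous := ?_, irrefl := fun a h => h.2 rfl, trans := ?_ }
    · intro a b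
      rcases eq_or_ne a b with rfl | hab
      · exact fun _ _ => rfl
      rcases htot a b with h | h
      · exact fun h1 _ => (h1 ⟨h, hab⟩).elim
      · exact fun _ h2 => (h2 ⟨h, hab.symm⟩).elim
    · rintro a b c ⟨h1, h2⟩ ⟨h3, h4⟩
      refine ⟨htrans _ _ _ h1 h3, fun h => ?_⟩
      subst h
      exact h2 (hanti _ _ h1 h3)
  haveI : DecidableRel lt := Classical.decRel _
  let lo : LinearOrder (Fin n) := linearOrderOfSTO lt
  have hle : ∀ a b, lo.le a b ↔ le a b := by
    intro a b
    constructor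
    · rintro (rfl | h)
      · exact hrefl a
      · exact h.1
    · intro h
      rcases eq_or_ne a b with rfl | hab
      · exact Or.inl rfl
      · exact Or.inr ⟨h, hab⟩
  let e : @OrderIso (Fin n) (Fin n) instLEFin lo.toLE := @monoEquivOfFin (Fin n) _ lo n (by simp)
  refine ⟨e.toEquiv.symm, fun i j => ?_⟩
  rw [← hle]
  exact @OrderIso.le_iff_le _ _ lo.toLE instLEFin (@OrderIso.symm _ _ instLEFin lo.toLE e) i j

/-- A subset `U ⊆ S_n` with `|U| > 1` is a left weak Bruhat interval if and only if
`U = Σ_L(P)` for some regular poset `P` on `{1,…,n}`. -/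
theorem left_interval_iff_regular {n : ℕ} (U : Set (Equiv.Perm (Fin n)))
    (hU : 1 < U.ncard) :
    (∃ σ ρ, lLE σ ρ ∧ U = {γ | lLE σ γ ∧ lLE γ ρ}) ↔
    (∃ r : Fin n → Fin n → Prop, IsPartialOrder (Fin n) r ∧ RegularRel r ∧
      U = {σ : Equiv.Perm (Fin n) | ∀ i j, r i j → σ i ≤ σ j}) := by
  classical
  constructor
  · rintro ⟨σ, ρ, hσρ, rfl⟩
    have hsub : ∀ i j : Fin n, i < j → σ j < σ i → ρ j < ρ i :=
      fun i j h1 h2 => (hσρ (show ((i, j) : Fin n × Fin n) ∈ InvL σ from ⟨h1, h2⟩)).2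
    refine ⟨fun a b => a = b ∨ (a < b ∧ ρ a < ρ b) ∨ (b < a ∧ σ a < σ b), ?_, ?_, ?_⟩
    · refine { refl := fun a => Or.inl rfl, trans := ?_, antisymm := ?_ }
      · rintro a b c (rfl | ⟨hab, hr⟩ | ⟨hba, hs⟩) hbc
        · exact hbc
        · rcases hbc with rfl | ⟨hbc, hr2⟩ | ⟨hcb, hs2⟩
          · exact Or.inr (Or.inl ⟨hab, hr⟩)
          · exact Or.inr (Or.inl ⟨hab.trans hbc, hr.trans hr2⟩)
          · -- a<b, ρa<ρb ; c<b, σb<σc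
            rcases lt_trichotomy a c with hac | rfl | hca
            · -- a<c<b : ρ b < ρ c from inversion (c,b) of σ
              exact Or.inr (Or.inl ⟨hac, hr.trans (hsub c b hcb hs2)⟩)
            · exact Or.inl rfl
            · -- c<a<b : need σ a < σ c
              refine Or.inr (Or.inr ⟨hca, ?_⟩)
              rcases lt_trichotomy (σ a) (σ c) with h | h | h
              · exact h
              · exact absurd (σ.injective h) hca.ne'
              · -- σ c < σ a, σ b < σ c ⇒ σ b < σ a, a<b ⇒ ρ b < ρ a contra
                exact absurd (hsub a b hab (hs2.trans h)) (asymm hr)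
        · rcases hbc with rfl | ⟨hbc, hr2⟩ | ⟨hcb, hs2⟩
          · exact Or.inr (Or.inr ⟨hba, hs⟩)
          · -- b<a, σa<σb ; b<c, ρb<ρc
            rcases lt_trichotomy a c with hac | rfl | hca
            · -- need ρ a < ρ c : (b,a) ∈ InvL σ ⇒ ρ a < ρ b
              exact Or.inr (Or.inl ⟨hac, (hsub b a hba hs).trans hr2⟩)
            · exact Or.inl rfl
            · -- b<c<a : need σ a < σ c
              refine Or.inr (Or.inr ⟨hca, ?_⟩)
              rcases lt_trichotomy (σ a) (σ c) with h | h | h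
              · exact h
              · exact absurd (σ.injective h) hca.ne'
              · -- σ c < σ a < σ b ⇒ (b,c) ∈ InvL σ ⇒ ρ c < ρ b contra
                exact absurd (hsub b c hbc (h.trans hs)) (asymm hr2)
          · exact Or.inr (Or.inr ⟨hcb.trans hba, hs.trans hs2⟩)
      · rintro a b (rfl | ⟨hab, hr⟩ | ⟨hba, hs⟩) hba'
        · rfl
        · rcases hba' with rfl | ⟨h1, h2⟩ | ⟨h1, h2⟩
          · rfl
          · exact absurd h1 (asymm hab)
          · exact absurd (hsub a b hab h2) (asymm hr)
        · rcases hba' with rfl | ⟨h1, h2⟩ | ⟨h1, h2⟩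
          · rfl
          · exact absurd (hsub b a hba hs) (asymm h2)
          · exact absurd h1 (asymm hba)
    · rintro x y z (rfl | ⟨hxz, hr⟩ | ⟨hzx, hs⟩) hbet
      · rcases hbet with ⟨h1, h2⟩ | ⟨h1, h2⟩
        · exact absurd (h1.trans h2) (lt_irrefl _)
        · exact absurd (h1.trans h2) (lt_irrefl _)
      · rcases hbet with ⟨h1, h2⟩ | ⟨h1, h2⟩
        · rcases lt_trichotomy (ρ x) (ρ y) with h | h | h
          · exact Or.inl (Or.inr (Or.inl ⟨h1, h⟩))
          · exact absurd (ρ.injective h) h1.ne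
          · exact Or.inr (Or.inr (Or.inl ⟨h2, h.trans hr⟩))
        · exact absurd ((hxz.trans h1).trans h2) (lt_irrefl _)
      · rcases hbet with ⟨h1, h2⟩ | ⟨h1, h2⟩
        · exact absurd ((hzx.trans h1).trans h2) (lt_irrefl _)
        · rcases lt_trichotomy (σ x) (σ y) with h | h | h
          · exact Or.inl (Or.inr (Or.inr ⟨h2, h⟩))
          · exact absurd (σ.injective h) h2.ne'
          · exact Or.inr (Or.inr (Or.inr ⟨h1, h.trans hs⟩))
    · ext γ
      simp only [Set.mem_setOf_eq]
      constructor
      · rintro ⟨hσγ, hγρ⟩ i j (rfl | ⟨hij, hr⟩ | ⟨hji, hs⟩)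
        · exact le_refl _
        · by_contra h
          have hlt : γ j < γ i := lt_of_not_ge h
          exact absurd (hγρ (show ((i, j) : Fin n × Fin n) ∈ InvL γ from ⟨hij, hlt⟩)).2 (asymm hr)
        · exact le_of_lt (hσγ (show ((j, i) : Fin n × Fin n) ∈ InvL σ from ⟨hji, hs⟩)).2
      · intro h
        constructor
        · rintro ⟨i, j⟩ ⟨hij, hs⟩
          refine ⟨hij, lt_of_le_of_ne (h j i (Or.inr (Or.inr ⟨hij, hs⟩))) ?_⟩
          exact fun he => hij.ne (γ.injective he).symm
        · rintro ⟨i, j⟩ ⟨hij, hg⟩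
          refine ⟨hij, ?_⟩
          rcases lt_trichotomy (ρ i) (ρ j) with hρ | hρ | hρ
          · exact absurd (h i j (Or.inr (Or.inl ⟨hij, hρ⟩))) (not_le_of_gt hg)
          · exact absurd (ρ.injective hρ) hij.ne
          · exact hρ
  · rintro ⟨r, hpo, hreg, rfl⟩
    have htr : ∀ a b c, r a b → r b c → r a c := fun a b c => hpo.trans a b c
    have hanti : ∀ a b, r a b → r b a → a = b := fun a b => hpo.antisymm a b
    have hrefl : ∀ a, r a a := hpo.refl
    -- minimal element
    obtain ⟨σ, hσ⟩ := exists_perm_of_linear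
      (fun a b => a = b ∨ (a < b ∧ ¬ r b a) ∨ (b < a ∧ r a b))
      (fun a => Or.inl rfl)
      (by
        rintro a b c (rfl | ⟨hab, hr⟩ | ⟨hba, hr⟩) hbc
        · exact hbc
        · rcases hbc with rfl | ⟨hbc, hr2⟩ | ⟨hcb, hr2⟩
          · exact Or.inr (Or.inl ⟨hab, hr⟩)
          · -- a<b<c, ¬ r b a, ¬ r c b
            refine Or.inr (Or.inl ⟨hab.trans hbc, fun hca => ?_⟩)
            rcases hreg c b a hca (Or.inr ⟨hab, hbc⟩) with h | h
            · exact hr2 h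
            · exact hr h
          · -- a<b, ¬ r b a ; c<b, r b c
            rcases lt_trichotomy a c with hac | rfl | hca
            · -- a<c<b : ¬ r c a since r c a with r b c gives r b a
              exact Or.inr (Or.inl ⟨hac, fun hca => hr (htr b c a hr2 hca)⟩)
            · exact Or.inl rfl
            · -- c<a<b : need r a c from regularity of r b c
              refine Or.inr (Or.inr ⟨hca, ?_⟩)
              rcases hreg b a c hr2 (Or.inr ⟨hca, hab⟩) with h | h
              · exact absurd h hr
              · exact h
        · rcases hbc with rfl | ⟨hbc, hr2⟩ | ⟨hcb, hr2⟩
          · exact Or.inr (Or.inr ⟨hba, hr⟩)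
          · -- b<a, r a b ; b<c, ¬ r c b
            rcases lt_trichotomy a c with hac | rfl | hca
            · -- b<a<c : ¬ r c a
              exact Or.inr (Or.inl ⟨hac, fun hca => hr2 (htr c a b hca hr)⟩)
            · exact Or.inl rfl
            · -- b<c<a : r a c from regularity of r a b
              refine Or.inr (Or.inr ⟨hca, ?_⟩)
              rcases hreg a c b hr (Or.inr ⟨hbc, hca⟩) with h | h
              · exact h
              · exact absurd h hr2
          · -- c<b<a : r a b, r b c
            exact Or.inr (Or.inr ⟨hcb.trans hba, htr a b c hr hr2⟩)
      )
      (by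
        rintro a b (rfl | ⟨hab, h1⟩ | ⟨hba, h1⟩) hba'
        · rfl
        · rcases hba' with rfl | ⟨h2, h3⟩ | ⟨h2, h3⟩
          · rfl
          · exact absurd h2 (asymm hab)
          · exact absurd h3 h1
        · rcases hba' with rfl | ⟨h2, h3⟩ | ⟨h2, h3⟩
          · rfl
          · exact absurd h1 h3
          · exact absurd h2 (asymm hba)
      )
      (by
        intro a b
        rcases lt_trichotomy a b with hab | rfl | hba
        · by_cases h : r b a
          · exact Or.inr (Or.inr (Or.inr ⟨hab, h⟩))
          · exact Or.inl (Or.inr (Or.inl ⟨hab, h⟩))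
        · exact Or.inl (Or.inl rfl)
        · by_cases h : r a b
          · exact Or.inl (Or.inr (Or.inr ⟨hba, h⟩))
          · exact Or.inr (Or.inr (Or.inl ⟨hba, h⟩))
      )
    -- maximal element
    obtain ⟨ρ, hρ⟩ := exists_perm_of_linear
      (fun a b => a = b ∨ (a < b ∧ r a b) ∨ (b < a ∧ ¬ r b a))
      (fun a => Or.inl rfl)
      (by
        rintro a b c (rfl | ⟨hab, hr⟩ | ⟨hba, hr⟩) hbc
        · exact hbc
        · rcases hbc with rfl | ⟨hbc, hr2⟩ | ⟨hcb, hr2⟩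
          · exact Or.inr (Or.inl ⟨hab, hr⟩)
          · exact Or.inr (Or.inl ⟨hab.trans hbc, htr a b c hr hr2⟩)
          · -- a<b, r a b ; c<b, ¬ r c b
            rcases lt_trichotomy a c with hac | rfl | hca
            · -- a<c<b : r a c from regularity of r a b
              refine Or.inr (Or.inl ⟨hac, ?_⟩)
              rcases hreg a c b hr (Or.inl ⟨hac, hcb⟩) with h | h
              · exact h
              · exact absurd h hr2
            · exact Or.inl rfl
            · -- c<a<b : ¬ r c a
              exact Or.inr (Or.inr ⟨hca, fun h => hr2 (htr c a b h hr)⟩)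
        · rcases hbc with rfl | ⟨hbc, hr2⟩ | ⟨hcb, hr2⟩
          · exact Or.inr (Or.inr ⟨hba, hr⟩)
          · -- b<a, ¬ r b a ; b<c, r b c
            rcases lt_trichotomy a c with hac | rfl | hca
            · -- b<a<c : r a c from regularity of r b c
              refine Or.inr (Or.inl ⟨hac, ?_⟩)
              rcases hreg b a c hr2 (Or.inl ⟨hba, hac⟩) with h | h
              · exact absurd h hr
              · exact h
            · exact Or.inl rfl
            · -- b<c<a : ¬ r c a
              exact Or.inr (Or.inr ⟨hca, fun h => hr (htr b c a hr2 h)⟩)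
          · -- c<b<a : ¬ r b a, ¬ r c b ; ¬ r c a by regularity
            refine Or.inr (Or.inr ⟨hcb.trans hba, fun h => ?_⟩)
            rcases hreg c b a h (Or.inl ⟨hcb, hba⟩) with h' | h'
            · exact hr2 h'
            · exact hr h'
      )
      (by
        rintro a b (rfl | ⟨hab, h1⟩ | ⟨hba, h1⟩) hba'
        · rfl
        · rcases hba' with rfl | ⟨h2, h3⟩ | ⟨h2, h3⟩
          · rfl
          · exact absurd h2 (asymm hab)
          · exact absurd h1 h3
        · rcases hba' with rfl | ⟨h2, h3⟩ | ⟨h2, h3⟩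
          · rfl
          · exact absurd h3 h1
          · exact absurd h2 (asymm hba)
      )
      (by
        intro a b
        rcases lt_trichotomy a b with hab | rfl | hba
        · by_cases h : r a b
          · exact Or.inl (Or.inr (Or.inl ⟨hab, h⟩))
          · exact Or.inr (Or.inr (Or.inr ⟨hab, h⟩))
        · exact Or.inl (Or.inl rfl)
        · by_cases h : r b a
          · exact Or.inr (Or.inr (Or.inl ⟨hba, h⟩))
          · exact Or.inl (Or.inr (Or.inr ⟨hba, h⟩))
      )
    -- key characterizations of inversions
    have hσc : ∀ i j : Fin n, i < j → (σ j < σ i ↔ r j i) := by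
      intro i j hij
      rw [← not_le, hσ]
      constructor
      · intro h
        by_contra hji
        exact h (Or.inr (Or.inl ⟨hij, hji⟩))
      · rintro hji (rfl | ⟨h1, h2⟩ | ⟨h1, h2⟩)
        · exact absurd hij (lt_irrefl _)
        · exact h2 hji
        · exact absurd (h1.trans hij) (lt_irrefl _)
    have hρc : ∀ i j : Fin n, i < j → (ρ j < ρ i ↔ ¬ r i j) := by
      intro i j hij
      rw [← not_le, hρ]
      constructor
      · intro h hji
        exact h (Or.inr (Or.inl ⟨hij, hji⟩))
      · rintro hij' (rfl | ⟨h1, h2⟩ | ⟨h1, h2⟩)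
        · exact absurd hij (lt_irrefl _)
        · exact hij' h2
        · exact absurd (h1.trans hij) (lt_irrefl _)
    refine ⟨σ, ρ, ?_, ?_⟩
    · rintro ⟨i, j⟩ ⟨hij, hs⟩
      refine ⟨hij, (hρc i j hij).mpr fun hrij => ?_⟩
      exact absurd (hanti _ _ hrij ((hσc i j hij).mp hs)) hij.ne
    · ext γ
      simp only [Set.mem_setOf_eq]
      constructor
      · intro h
        constructor
        · rintro ⟨i, j⟩ ⟨hij, hs⟩
          have hrji := (hσc i j hij).mp hs
          refine ⟨hij, lt_of_le_of_ne (h j i hrji) fun he => hij.ne (γ.injective he).symm⟩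
        · rintro ⟨i, j⟩ ⟨hij, hg⟩
          refine ⟨hij, (hρc i j hij).mpr fun hrij => ?_⟩
          exact absurd (h i j hrij) (not_le_of_gt hg)
      · rintro ⟨hσγ, hγρ⟩ i j hrij
        rcases lt_trichotomy i j with hij | rfl | hji
        · by_contra hc
          have hg : γ j < γ i := lt_of_not_ge hc
          exact absurd hrij ((hρc i j hij).mp (hγρ (show ((i, j) : Fin n × Fin n) ∈ InvL γ from ⟨hij, hg⟩)).2)
        · exact le_refl _
        · exact le_of_lt (hσγ (show ((j, i) : Fin n × Fin n) ∈ InvL σ from ⟨hji, (hσc j i hji).mpr hrij⟩)).2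
end
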